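/- Under the same hypotheses, if 𝔐(n) is any sequence in [0,n] with 𝔐(n) ~ M(n) (i.e. lim 𝔐(n)/M(n) = 1), then lim_{n→∞} F_n(𝔐(n)) = g(θ). -/

import Mathlib

open Filter Set

theorem stmt_2 (F : ℕ → ℝ → ℝ) (M 𝔐 : ℕ → ℝ) (g : ℝ → ℝ) (θ : ℝ)
    (hF : ∀ n : ℕ, ContinuousOn (F n) (Set.Icc 0 (n : ℝ)))
    (hM : ∀ n : ℕ, M n ∈ Set.Icc (0 : ℝ) (n : ℝ))
    (hMmax : ∀ n : ℕ, ∀ x ∈ Set.Icc (0 : ℝ) (n : ℝ), F n x ≤ F n (M n))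
    (hg : TendstoUniformlyOn (fun (n : ℕ) (x : ℝ) => F n ((n : ℝ) * x)) g
      Filter.atTop (Set.Icc 0 1))
    (hθ : θ ∈ Set.Icc (0 : ℝ) 1)
    (hθmax : ∀ x ∈ Set.Icc (0 : ℝ) 1, g x ≤ g θ)
    (hθuniq : ∀ x ∈ Set.Icc (0 : ℝ) 1, x ≠ θ → g x < g θ)
    (h𝔐 : ∀ n : ℕ, 𝔐 n ∈ Set.Icc (0 : ℝ) (n : ℝ))
    (hsim : Filter.Tendsto (fun n : ℕ => 𝔐 n / M n) Filter.atTop (nhds 1)) :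
    Filter.Tendsto (fun n : ℕ => F n (𝔐 n)) Filter.atTop (nhds (g θ)) := by
  -- gₙ continuous on [0,1]
  have hmaps : ∀ n : ℕ, Set.MapsTo (fun x : ℝ => (n : ℝ) * x) (Set.Icc 0 1) (Set.Icc 0 (n : ℝ)) := by
    intro n x hx
    constructor
    · exact mul_nonneg (Nat.cast_nonneg n) hx.1
    · calc (n:ℝ) * x ≤ (n:ℝ) * 1 := by
            exact mul_le_mul_of_nonneg_left hx.2 (Nat.cast_nonneg n)
        _ = n := mul_one _
  have hgn_cont : ∀ n : ℕ, ContinuousOn (fun x : ℝ => F n ((n : ℝ) * x)) (Set.Icc 0 1) := by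
    intro n
    exact (hF n).comp (continuous_const.mul continuous_id).continuousOn (hmaps n)
  have hgc : ContinuousOn g (Set.Icc 0 1) :=
    hg.continuousOn (Filter.Eventually.of_forall hgn_cont).frequently
  -- m n := M n / n ∈ [0,1] for n ≥ 1, and n * m n = M n
  have hmem : ∀ n : ℕ, 1 ≤ n → M n / n ∈ Set.Icc (0 : ℝ) 1 := by
    intro n hn
    have hn0 : (0:ℝ) < n := by exact_mod_cast hn
    exact ⟨div_nonneg (hM n).1 hn0.le, (div_le_one hn0).2 (hM n).2⟩
  have hnm : ∀ n : ℕ, 1 ≤ n → (n : ℝ) * (M n / n) = M n := by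
    intro n hn
    have hn0 : (n:ℝ) ≠ 0 := by positivity
    field_simp
  -- Step 1: M n / n → θ
  have hMtend : Filter.Tendsto (fun n : ℕ => M n / n) Filter.atTop (nhds θ) := by
    rw [Metric.tendsto_atTop]
    intro ε hε
    by_cases hK : (Set.Icc (0:ℝ) 1 ∩ {x | ε ≤ |x - θ|}).Nonempty
    · -- compact K, g attains max g z < g θ
      have hKc : IsCompact (Set.Icc (0:ℝ) 1 ∩ {x | ε ≤ |x - θ|}) := by
        apply (isCompact_Icc).inter_right
        have : {x : ℝ | ε ≤ |x - θ|} = (fun x => |x - θ|) ⁻¹' (Set.Ici ε) := rfl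
        rw [this]
        exact IsClosed.preimage (by continuity) isClosed_Ici
      obtain ⟨z, hzK, hzmax⟩ := hKc.exists_isMaxOn hK
        (hgc.mono (Set.inter_subset_left))
      have hzθ : z ≠ θ := by
        intro h
        have := hzK.2
        rw [h] at this
        simp at this
        linarith
      have hδ : g z < g θ := hθuniq z hzK.1 hzθ
      set δ := g θ - g z with hδdef
      have hδpos : 0 < δ := by linarith
      have hunif := (Metric.tendstoUniformlyOn_iff.1 hg) (δ/3) (by linarith)
      rw [Filter.eventually_atTop] at hunif
      obtain ⟨N, hN⟩ := hunif
      refine ⟨max N 1, fun n hn => ?_⟩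
      have hn1 : 1 ≤ n := le_trans (le_max_right N 1) hn
      have hnN : N ≤ n := le_trans (le_max_left N 1) hn
      by_contra hcon
      push_neg at hcon
      have hmnK : M n / n ∈ Set.Icc (0:ℝ) 1 ∩ {x | ε ≤ |x - θ|} :=
        ⟨hmem n hn1, by simpa [Real.dist_eq] using hcon⟩
      have h1 : dist (g (M n / n)) (F n ((n:ℝ) * (M n / n))) < δ/3 := hN n hnN _ (hmem n hn1)
      have h2 : dist (g θ) (F n ((n:ℝ) * θ)) < δ/3 := hN n hnN θ hθ
      have h3 : F n ((n:ℝ) * θ) ≤ F n (M n) := by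
        apply hMmax n _ (hmaps n hθ)
      rw [hnm n hn1] at h1
      have h4 : g (M n / n) ≤ g z := hzmax hmnK
      rw [Real.dist_eq] at h1 h2
      have h1' := abs_lt.1 h1
      have h2' := abs_lt.1 h2
      linarith
    · -- all of [0,1] is within ε of θ
      rw [Set.not_nonempty_iff_eq_empty] at hK
      refine ⟨1, fun n hn => ?_⟩
      have hx := hmem n hn
      by_contra hcon
      push_neg at hcon
      have : M n / n ∈ Set.Icc (0:ℝ) 1 ∩ {x | ε ≤ |x - θ|} :=
        ⟨hx, by simpa [Real.dist_eq] using hcon⟩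
      rw [hK] at this
      exact this
  -- Step 2: eventually M n ≠ 0
  have hMne : ∀ᶠ n : ℕ in Filter.atTop, M n ≠ 0 := by
    have := hsim.eventually (eventually_gt_nhds (show (0:ℝ) < 1 by norm_num) |>.mono
      (fun x hx => hx))
    filter_upwards [hsim.eventually_ne (show (1:ℝ) ≠ 0 by norm_num)] with n hn
    intro h
    apply hn
    simp [h]
  -- Step 3: 𝔐 n / n → θ
  have h𝔐tend : Filter.Tendsto (fun n : ℕ => 𝔐 n / n) Filter.atTop (nhds θ) := by
    have heq : ∀ᶠ n : ℕ in Filter.atTop, (𝔐 n / M n) * (M n / n) = 𝔐 n / n := by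
      filter_upwards [hMne] with n hn
      field_simp
    have := hsim.mul hMtend
    rw [one_mul] at this
    exact this.congr' heq
  -- Step 4: conclude
  have hmem𝔐 : ∀ᶠ n : ℕ in Filter.atTop, 𝔐 n / n ∈ Set.Icc (0:ℝ) 1 := by
    filter_upwards [Filter.eventually_ge_atTop 1] with n hn
    have hn0 : (0:ℝ) < n := by exact_mod_cast hn
    exact ⟨div_nonneg (h𝔐 n).1 hn0.le, (div_le_one hn0).2 (h𝔐 n).2⟩
  have hfin : Filter.Tendsto (fun n : ℕ => F n ((n:ℝ) * (𝔐 n / n))) Filter.atTop (nhds (g θ)) := by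
    apply hg.tendsto_comp (hgc θ hθ)
    rw [tendsto_nhdsWithin_iff]
    exact ⟨h𝔐tend, hmem𝔐⟩
  apply hfin.congr'
  filter_upwards [Filter.eventually_ge_atTop 1] with n hn
  have hn0 : (n:ℝ) ≠ 0 := by positivity
  field_simp
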